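/- Let A : ℝ → ℝ be defined recursively by A₁(z) = |d₁ + z| + c₁|z| and A_j(z) = c_j|z| + min_{w∈ℝ}(|w − z − d_j| + A_{j−1}(w)) for 2 ≤ j ≤ n−2, where all c_j ≥ 0 and d_j ∈ ℝ. Then each A_j is convex, and its leftmost slope is at most −1 and its rightmost slope is at least 1; in fact the leftmost slope of A_j is −1 − c_j and the rightmost slope is 1 + c_j. -/
import Mathlib


/-- The recursively defined partial objective functions of the dynamic program:
`A 1 z = |d 1 + z| + c 1 |z|` and
`A j z = c j |z| + min_w (|w - z - d j| + A (j-1) w)` for `j ≥ 2`. -/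
noncomputable def Arec (c d : ℕ → ℝ) : ℕ → ℝ → ℝ
  | 0 => fun _ => 0
  | 1 => fun z => |d 1 + z| + c 1 * |z|
  | (j + 2) => fun z => c (j + 2) * |z| + ⨅ w : ℝ, (|w - z - d (j + 2)| + Arec c d (j + 1) w)

namespace Stmt19Aux

/-- The combined inductive invariant. -/
def Good (k : ℝ) (A : ℝ → ℝ) : Prop :=
  (∀ w, 0 ≤ A w) ∧ ConvexOn ℝ Set.univ A ∧
  (∃ z₀ : ℝ, ∀ z w : ℝ, z ≤ w → w ≤ z₀ → A w - A z = (-1 - k) * (w - z)) ∧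
  (∃ z₁ : ℝ, ∀ z w : ℝ, z₁ ≤ z → z ≤ w → A w - A z = (1 + k) * (w - z))

/-- The inf-convolution of `A` with `|·|`. -/
noncomputable def Bconv (A : ℝ → ℝ) (t : ℝ) : ℝ := ⨅ w : ℝ, (|w - t| + A w)

lemma bdd {A : ℝ → ℝ} (hA0 : ∀ w, 0 ≤ A w) (t : ℝ) :
    BddBelow (Set.range fun w => |w - t| + A w) := by
  refine ⟨0, ?_⟩
  rintro x ⟨w, rfl⟩
  have := hA0 w
  positivity

lemma B_nonneg {A : ℝ → ℝ} (hA0 : ∀ w, 0 ≤ A w) (t : ℝ) : 0 ≤ Bconv A t :=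
  le_ciInf fun w => by have := hA0 w; positivity

lemma B_le {A : ℝ → ℝ} (hA0 : ∀ w, 0 ≤ A w) (t w : ℝ) : Bconv A t ≤ |w - t| + A w :=
  ciInf_le (bdd hA0 t) w

lemma le_B {A : ℝ → ℝ} {a t : ℝ} (h : ∀ w, a ≤ |w - t| + A w) : a ≤ Bconv A t :=
  le_ciInf h

lemma B_left {A : ℝ → ℝ} {k : ℝ} (hk : 0 ≤ k) (hA0 : ∀ w, 0 ≤ A w) {z₀ : ℝ}
    (htail : ∀ z w, z ≤ w → w ≤ z₀ → A w - A z = (-1 - k) * (w - z)) :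
    ∀ z t, z ≤ t → t ≤ z₀ → Bconv A t - Bconv A z = -(t - z) := by
  intro z t hzt htz
  have h1 : Bconv A z ≤ Bconv A t + (t - z) := by
    have : Bconv A z - (t - z) ≤ Bconv A t := by
      refine le_B fun w' => ?_
      have h := B_le hA0 z w'
      have htri : |w' - z| ≤ |w' - t| + |t - z| := abs_sub_le w' t z
      rw [abs_of_nonneg (by linarith : (0:ℝ) ≤ t - z)] at htri
      linarith
    linarith
  have h2 : Bconv A t + (t - z) ≤ Bconv A z := by
    refine le_B fun w' => ?_
    rcases le_total w' t with h | h
    · have hA' := htail w' t h htz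
      have hBt : Bconv A t ≤ A t := by
        have := B_le hA0 t t
        simpa using this
      have h1' := le_abs_self (w' - z)
      have h2' := mul_nonneg hk (sub_nonneg.2 h)
      linarith
    · have hBt := B_le hA0 t w'
      rw [abs_of_nonneg (by linarith : (0:ℝ) ≤ w' - t)] at hBt
      rw [abs_of_nonneg (by linarith : (0:ℝ) ≤ w' - z)]
      linarith
  linarith

lemma B_right {A : ℝ → ℝ} {k : ℝ} (hk : 0 ≤ k) (hA0 : ∀ w, 0 ≤ A w) {z₁ : ℝ}
    (htail : ∀ z w, z₁ ≤ z → z ≤ w → A w - A z = (1 + k) * (w - z)) :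
    ∀ t w, z₁ ≤ t → t ≤ w → Bconv A w - Bconv A t = w - t := by
  intro t w hzt htw
  have h1 : Bconv A w ≤ Bconv A t + (w - t) := by
    have : Bconv A w - (w - t) ≤ Bconv A t := by
      refine le_B fun w' => ?_
      have h := B_le hA0 w w'
      have htri : |w' - w| ≤ |w' - t| + |t - w| := abs_sub_le w' t w
      rw [abs_of_nonpos (by linarith : t - w ≤ (0:ℝ))] at htri
      linarith
    linarith
  have h2 : Bconv A t + (w - t) ≤ Bconv A w := by
    refine le_B fun w' => ?_
    rcases le_total t w' with h | h
    · have hA' := htail t w' hzt h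
      have hBt : Bconv A t ≤ A t := by
        have := B_le hA0 t t
        simpa using this
      have h1' := le_abs_self (w - w')
      have h2' := neg_abs_le (w' - w)
      have h3' := mul_nonneg hk (sub_nonneg.2 h)
      linarith
    · have hBt := B_le hA0 t w'
      rw [abs_of_nonpos (by linarith : w' - t ≤ (0:ℝ))] at hBt
      rw [abs_of_nonpos (by linarith : w' - w ≤ (0:ℝ))]
      linarith
  linarith

lemma B_convex {A : ℝ → ℝ} (hA0 : ∀ w, 0 ≤ A w) (hA : ConvexOn ℝ Set.univ A) :
    ConvexOn ℝ Set.univ (Bconv A) := by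
  refine ⟨convex_univ, ?_⟩
  intro x _ y _ a b ha hb hab
  simp only [smul_eq_mul]
  apply le_of_forall_pos_le_add
  intro ε hε
  have hx : Bconv A x < Bconv A x + ε := by linarith
  have hy : Bconv A y < Bconv A y + ε := by linarith
  obtain ⟨w₁, hw₁⟩ := exists_lt_of_ciInf_lt hx
  obtain ⟨w₂, hw₂⟩ := exists_lt_of_ciInf_lt hy
  have hle : Bconv A (a * x + b * y) ≤ |(a * w₁ + b * w₂) - (a * x + b * y)| + A (a * w₁ + b * w₂) :=
    B_le hA0 _ _
  have hconv := hA.2 (Set.mem_univ w₁) (Set.mem_univ w₂) ha hb hab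
  simp only [smul_eq_mul] at hconv
  have habs : |(a * w₁ + b * w₂) - (a * x + b * y)| ≤ a * |w₁ - x| + b * |w₂ - y| := by
    have heq : (a * w₁ + b * w₂) - (a * x + b * y) = a * (w₁ - x) + b * (w₂ - y) := by ring
    rw [heq]
    calc |a * (w₁ - x) + b * (w₂ - y)| ≤ |a * (w₁ - x)| + |b * (w₂ - y)| := abs_add_le _ _
      _ = a * |w₁ - x| + b * |w₂ - y| := by
          rw [abs_mul, abs_mul, abs_of_nonneg ha, abs_of_nonneg hb]
  have hm1 := mul_le_mul_of_nonneg_left hw₁.le ha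
  have hm2 := mul_le_mul_of_nonneg_left hw₂.le hb
  have heps : a * ε + b * ε = ε := by rw [← add_mul, hab, one_mul]
  nlinarith [hle, hconv, habs, hm1, hm2]

lemma abs_convex (cc : ℝ) (hcc : 0 ≤ cc) : ConvexOn ℝ Set.univ (fun z : ℝ => cc * |z|) := by
  refine ⟨convex_univ, fun x _ y _ a b ha hb hab => ?_⟩
  simp only [smul_eq_mul]
  have h2 : |a * x + b * y| ≤ a * |x| + b * |y| := by
    calc |a * x + b * y| ≤ |a * x| + |b * y| := abs_add_le _ _
      _ = a * |x| + b * |y| := by rw [abs_mul, abs_mul, abs_of_nonneg ha, abs_of_nonneg hb]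
  nlinarith [mul_le_mul_of_nonneg_left h2 hcc]

lemma step_good {A : ℝ → ℝ} {k cc e : ℝ} (hk : 0 ≤ k) (hcc : 0 ≤ cc)
    (hG : Good k A) :
    Good cc (fun z => cc * |z| + ⨅ w : ℝ, (|w - z - e| + A w)) := by
  obtain ⟨h0, hcv, ⟨z₀, hL⟩, ⟨z₁, hR⟩⟩ := hG
  have hfun : (fun z => cc * |z| + ⨅ w : ℝ, (|w - z - e| + A w))
      = fun z => cc * |z| + Bconv A (z + e) := by
    funext z
    congr 1
    exact iInf_congr fun w => by rw [sub_sub]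
  rw [hfun]
  refine ⟨?_, ?_, ?_, ?_⟩
  · intro w
    dsimp only
    have h1 := B_nonneg h0 (w + e)
    have h2 : 0 ≤ cc * |w| := by positivity
    linarith
  · have hBc := B_convex h0 hcv
    have hBsh : ConvexOn ℝ Set.univ (fun z => Bconv A (z + e)) := by
      refine ⟨convex_univ, fun x _ y _ a b ha hb hab => ?_⟩
      have h := hBc.2 (Set.mem_univ (x + e)) (Set.mem_univ (y + e)) ha hb hab
      simp only [smul_eq_mul] at h ⊢
      have heq : a * (x + e) + b * (y + e) = a * x + b * y + e := by
        linear_combination e * hab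
      rw [heq] at h
      exact h
    exact (abs_convex cc hcc).add hBsh
  · refine ⟨min (z₀ - e) 0, fun z w hzw hw => ?_⟩
    have hw0 : w ≤ 0 := hw.trans (min_le_right _ _)
    have hz0 : z ≤ 0 := hzw.trans hw0
    have hwe : w + e ≤ z₀ := by
      have := hw.trans (min_le_left _ _); linarith
    have hB := B_left hk h0 hL (z + e) (w + e) (by linarith) hwe
    dsimp only
    rw [abs_of_nonpos hw0, abs_of_nonpos hz0]
    linear_combination hB
  · refine ⟨max (z₁ - e) 0, fun z w hz hzw => ?_⟩
    have hz0 : 0 ≤ z := (le_max_right _ _).trans hz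
    have hw0 : 0 ≤ w := hz0.trans hzw
    have hze : z₁ ≤ z + e := by
      have := (le_max_left _ _).trans hz; linarith
    have hB := B_right hk h0 hR (z + e) (w + e) hze (by linarith)
    dsimp only
    rw [abs_of_nonneg hw0, abs_of_nonneg hz0]
    linear_combination hB

lemma base_good {c1 d1 : ℝ} (hc : 0 ≤ c1) :
    Good c1 (fun z => |d1 + z| + c1 * |z|) := by
  refine ⟨fun w => by positivity, ?_, ?_, ?_⟩
  · have h1 : ConvexOn ℝ Set.univ (fun z : ℝ => |d1 + z|) := by
      refine ⟨convex_univ, fun x _ y _ a b ha hb hab => ?_⟩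
      simp only [smul_eq_mul]
      have heq : d1 + (a * x + b * y) = a * (d1 + x) + b * (d1 + y) := by
        linear_combination (-d1) * hab
      rw [heq]
      calc |a * (d1 + x) + b * (d1 + y)| ≤ |a * (d1 + x)| + |b * (d1 + y)| := abs_add_le _ _
        _ = a * |d1 + x| + b * |d1 + y| := by
            rw [abs_mul, abs_mul, abs_of_nonneg ha, abs_of_nonneg hb]
    exact h1.add (abs_convex c1 hc)
  · refine ⟨min (-d1) 0, fun z w hzw hw => ?_⟩
    have hw0 : w ≤ 0 := hw.trans (min_le_right _ _)
    have hwd : w ≤ -d1 := hw.trans (min_le_left _ _)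
    dsimp only
    rw [abs_of_nonpos hw0, abs_of_nonpos (hzw.trans hw0),
        abs_of_nonpos (by linarith : d1 + w ≤ 0),
        abs_of_nonpos (by linarith : d1 + z ≤ 0)]
    ring
  · refine ⟨max (-d1) 0, fun z w hz hzw => ?_⟩
    have hz0 : 0 ≤ z := (le_max_right _ _).trans hz
    have hzd : -d1 ≤ z := (le_max_left _ _).trans hz
    dsimp only
    rw [abs_of_nonneg hz0, abs_of_nonneg (hz0.trans hzw),
        abs_of_nonneg (by linarith : 0 ≤ d1 + z),
        abs_of_nonneg (by linarith : 0 ≤ d1 + w)]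
    ring

lemma good_all (c d : ℕ → ℝ) (hc : ∀ j, 0 ≤ c j) :
    ∀ j, 1 ≤ j → Good (c j) (Arec c d j) := by
  intro j
  induction j using Nat.strong_induction_on with
  | _ j ih =>
    rcases j with _ | _ | k
    · intro h; exact absurd h (by norm_num)
    · intro _
      exact base_good (hc 1)
    · intro _
      have hprev := ih (k + 1) (by omega) (by omega)
      exact step_good (hc (k + 1)) (hc (k + 2)) hprev

end Stmt19Aux

theorem stmt19 (c d : ℕ → ℝ) (hc : ∀ j, 0 ≤ c j) (j : ℕ) (hj : 1 ≤ j) :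
    ConvexOn ℝ Set.univ (Arec c d j) ∧
    -- the leftmost slope of `A j` is `-1 - c j` (in particular, at most `-1`)
    (∃ z₀ : ℝ, ∀ z w : ℝ, z ≤ w → w ≤ z₀ →
      Arec c d j w - Arec c d j z = (-1 - c j) * (w - z)) ∧
    -- the rightmost slope of `A j` is `1 + c j` (in particular, at least `1`)
    (∃ z₁ : ℝ, ∀ z w : ℝ, z₁ ≤ z → z ≤ w →
      Arec c d j w - Arec c d j z = (1 + c j) * (w - z)) := by
  obtain ⟨_, h1, h2, h3⟩ := Stmt19Aux.good_all c d hc j hj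
  exact ⟨h1, h2, h3⟩
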